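/- For the contact form λ₀ = -(1-3cos²θ)dt - √6 cosθ sin²θ dφ on S¹×S², the vector field R = (-1/(1+3cos⁴θ))·((1-3cos²θ)∂_t + √6 cosθ ∂_φ) satisfies λ₀(R)=1 and dλ₀(R,·)=0, i.e. R is the Reeb vector field of λ₀. -/

import Mathlib

/-- Coefficients of Taubes' contact form `λ₀ = a₁(θ) dt + a₂(θ) dφ` on `S¹ × S²`. -/
noncomputable def taubesA1 (θ : ℝ) : ℝ := -(1 - 3 * Real.cos θ ^ 2)
noncomputable def taubesA2 (θ : ℝ) : ℝ := -(Real.sqrt 6) * Real.cos θ * Real.sin θ ^ 2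

/-- Components of the vector field
`R = (-1/(1+3cos⁴θ)) ((1-3cos²θ) ∂_t + √6 cosθ ∂_φ)`. -/
noncomputable def reebT (θ : ℝ) : ℝ := -(1 - 3 * Real.cos θ ^ 2) / (1 + 3 * Real.cos θ ^ 4)
noncomputable def reebPhi (θ : ℝ) : ℝ := -(Real.sqrt 6) * Real.cos θ / (1 + 3 * Real.cos θ ^ 4)

lemma denom_pos (θ : ℝ) : (0:ℝ) < 1 + 3 * Real.cos θ ^ 4 := by positivity

lemma derivA1 (θ : ℝ) : deriv taubesA1 θ = -(6 * Real.cos θ * Real.sin θ) := by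
  have h : HasDerivAt taubesA1 (-(6 * Real.cos θ * Real.sin θ)) θ := by
    have := ((Real.hasDerivAt_cos θ).pow 2).const_mul (3:ℝ)
    have h2 := this.const_sub (1:ℝ)
    have h3 := h2.neg
    exact h3.congr_deriv (by rw [show (2:ℕ) - 1 = 1 from rfl]; push_cast; ring)
  exact h.deriv

lemma derivA2 (θ : ℝ) :
    deriv taubesA2 θ =
      -(Real.sqrt 6) * (-(Real.sin θ ^ 3) + 2 * Real.sin θ * Real.cos θ ^ 2) := by
  have h1 := ((Real.hasDerivAt_cos θ).mul ((Real.hasDerivAt_sin θ).pow 2)).const_mul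
    (-(Real.sqrt 6))
  have heq : taubesA2 = fun y => -(Real.sqrt 6) * (Real.cos y * Real.sin y ^ 2) := by
    funext y; unfold taubesA2; ring
  rw [heq]
  refine h1.deriv.trans ?_
  rw [show (2:ℕ) - 1 = 1 from rfl, Pi.pow_apply]
  push_cast
  ring

/-- `λ₀(R) = a₁ R_t + a₂ R_φ = 1`, and since `dλ₀ = a₁' dθ∧dt + a₂' dθ∧dφ` and `R` has no
`∂_θ`-component, `ι_R dλ₀ = -(a₁' R_t + a₂' R_φ) dθ = 0`.  Hence `R` is the Reeb vector
field of `λ₀`. -/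
theorem stmt_1 :
    (∀ θ : ℝ, taubesA1 θ * reebT θ + taubesA2 θ * reebPhi θ = 1) ∧
    (∀ θ : ℝ, deriv taubesA1 θ * reebT θ + deriv taubesA2 θ * reebPhi θ = 0) := by
  have h6 : Real.sqrt 6 * Real.sqrt 6 = 6 :=
    Real.mul_self_sqrt (by norm_num)
  constructor
  · intro θ
    have hD := (denom_pos θ).ne'
    have hsc := Real.sin_sq_add_cos_sq θ
    unfold taubesA1 taubesA2 reebT reebPhi
    field_simp
    linear_combination (Real.cos θ ^ 2 * Real.sin θ ^ 2) * h6 + 6 * Real.cos θ ^ 2 * hsc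
  · intro θ
    have hD := (denom_pos θ).ne'
    have hsc := Real.sin_sq_add_cos_sq θ
    rw [derivA1, derivA2]
    unfold reebT reebPhi
    field_simp
    linear_combination
      (-(Real.cos θ * Real.sin θ ^ 3) + 2 * Real.cos θ ^ 3 * Real.sin θ) * h6 -
      (6 * Real.cos θ * Real.sin θ) * hsc
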